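/- Let G be a finite simple graph with vertex set V = {1,…,n}, edge set E, and stability number α(G), let r ≥ 1, and let A, (Q_i), (Q_{ij}) be a Nullstellensatz certificate 1 = A·(−(α(G)+r) + Σ_{i=1}^n x_i) + Σ_{i∈V} Q_i·(x_i² − x_i) + Σ_{{i,j}∈E} Q_{ij}·x_i·x_j that is reduced, i.e., every monomial of A is square-free with support a stable set of G. Then for every maximal stable set M = {d_1,…,d_{|M|}} of G and every i ∈ {1,…,|M|}, the linear monomial x_{d_i} appears in A with a non-zero coefficient. -/

import Mathlib

open Finset MvPolynomial

/-- The edge set of `G`, as ordered pairs `(i, j)` with `i < j`. -/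
def edgePairs {n : ℕ} (G : SimpleGraph (Fin n)) [DecidableRel G.Adj] :
    Finset (Fin n × Fin n) :=
  Finset.univ.filter fun p => p.1 < p.2 ∧ G.Adj p.1 p.2

/-- A finset of vertices is stable (independent) if no two of its members are adjacent. -/
def IsStableSet {n : ℕ} (G : SimpleGraph (Fin n)) (S : Finset (Fin n)) : Prop :=
  ∀ i ∈ S, ∀ j ∈ S, ¬ G.Adj i j

/-- The stability number `α(G)`: the maximum size of a stable set of `G`. -/
def stabilityNumber {n : ℕ} (G : SimpleGraph (Fin n)) [DecidableRel G.Adj] : ℕ :=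
  (Finset.univ.powerset.filter fun S => ∀ i ∈ S, ∀ j ∈ S, ¬ G.Adj i j).sup Finset.card

/-- The Nullstellensatz certificate identity
`1 = A(−(α(G)+r) + Σ x_i) + Σ_i Q_i (x_i² − x_i) + Σ_{{i,j}∈E} Q_{ij} x_i x_j`
for the non-existence of a stable set of size `α(G) + r`. -/
def IsStableCert {n : ℕ} (G : SimpleGraph (Fin n)) [DecidableRel G.Adj] (r : ℕ)
    (A : MvPolynomial (Fin n) ℂ) (Q : Fin n → MvPolynomial (Fin n) ℂ)
    (Qe : Fin n × Fin n → MvPolynomial (Fin n) ℂ) : Prop :=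
  (1 : MvPolynomial (Fin n) ℂ) =
    A * ((∑ i : Fin n, X i) - C ((stabilityNumber G + r : ℕ) : ℂ)) +
    (∑ i : Fin n, Q i * (X i ^ 2 - X i)) +
    ∑ p ∈ edgePairs G, Qe p * (X p.1 * X p.2)

/-- The degree of a certificate: `max{deg A, deg Q_i, deg Q_{ij}}` (total degrees). -/
def stableCertDeg {n : ℕ} (G : SimpleGraph (Fin n)) [DecidableRel G.Adj]
    (A : MvPolynomial (Fin n) ℂ) (Q : Fin n → MvPolynomial (Fin n) ℂ)
    (Qe : Fin n × Fin n → MvPolynomial (Fin n) ℂ) : ℕ :=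
  max A.totalDegree
    (max (Finset.univ.sup fun i => (Q i).totalDegree)
      ((edgePairs G).sup fun p => (Qe p).totalDegree))

/-- A certificate is reduced when every monomial of `A` is square-free and its support
is a stable set of `G`. -/
def IsReducedCoeff {n : ℕ} (G : SimpleGraph (Fin n)) (A : MvPolynomial (Fin n) ℂ) : Prop :=
  ∀ m ∈ A.support, (∀ i : Fin n, m i ≤ 1) ∧ IsStableSet G m.support

/-- The square-free exponent vector `∏_{v ∈ S} x_v` associated with a finset `S`. -/
noncomputable def expOf {n : ℕ} (S : Finset (Fin n)) : Fin n →₀ ℕ :=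
  ∑ v ∈ S, Finsupp.single v 1

lemma eval_indicator {n : ℕ} (A : MvPolynomial (Fin n) ℂ) (S : Finset (Fin n)) :
    eval (fun i => if i ∈ S then (1:ℂ) else 0) A
      = ∑ m ∈ A.support.filter (fun m => m.support ⊆ S), coeff m A := by
  rw [eval_eq, ← Finset.sum_filter_add_sum_filter_not A.support (fun m => m.support ⊆ S)]
  have h2 : ∑ m ∈ A.support.filter (fun m => ¬ m.support ⊆ S),
      coeff m A * ∏ i ∈ m.support, (if i ∈ S then (1:ℂ) else 0) ^ m i = 0 := by
    refine Finset.sum_eq_zero fun m hm => ?_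
    simp only [Finset.mem_filter] at hm
    obtain ⟨i, hi, hiS⟩ := Finset.not_subset.mp hm.2
    have : (if i ∈ S then (1:ℂ) else 0) ^ m i = 0 := by
      rw [if_neg hiS]
      exact zero_pow (Finsupp.mem_support_iff.mp hi)
    rw [Finset.prod_eq_zero hi this, mul_zero]
  rw [h2, add_zero]
  refine Finset.sum_congr rfl fun m hm => ?_
  simp only [Finset.mem_filter] at hm
  rw [Finset.prod_congr rfl (fun i hi => by rw [if_pos (hm.2 hi), one_pow]),
    Finset.prod_const_one, mul_one]

/-- In a reduced Nullstellensatz certificate for the non-existence of a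
stable set of size `α(G) + r`, the linear monomial `x_v` appears with non-zero coefficient
in `A` for every member `v` of any maximal stable set `M` of `G`. -/
theorem linear_term_appears_in_reduced_certificate (n : ℕ) (G : SimpleGraph (Fin n))
    [DecidableRel G.Adj] (r : ℕ) (hr : 1 ≤ r)
    (A : MvPolynomial (Fin n) ℂ) (Q : Fin n → MvPolynomial (Fin n) ℂ)
    (Qe : Fin n × Fin n → MvPolynomial (Fin n) ℂ)
    (hcert : IsStableCert G r A Q Qe) (hred : IsReducedCoeff G A)
    (M : Finset (Fin n)) (hM : IsStableSet G M)
    (hmax : ∀ S : Finset (Fin n), IsStableSet G S → M ⊆ S → S = M) :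
    ∀ v ∈ M, MvPolynomial.coeff (Finsupp.single v 1) A ≠ 0 := by
  intro v _ hb
  set k : ℂ := ((stabilityNumber G + r : ℕ) : ℂ) with hk
  -- evaluation of the certificate at indicator of a stable set S
  have key : ∀ S : Finset (Fin n), IsStableSet G S →
      (1 : ℂ) = (eval (fun i => if i ∈ S then (1:ℂ) else 0) A) * ((S.card : ℂ) - k) := by
    intro S hS
    have := congrArg (eval (fun i => if i ∈ S then (1:ℂ) else 0)) hcert
    simp only [IsStableCert, map_add, map_mul, map_sub, map_sum, map_pow, eval_X, eval_C,
      map_one] at this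
    have hsum : ∑ i : Fin n, (if i ∈ S then (1:ℂ) else 0) = (S.card : ℂ) := by
      rw [Finset.sum_ite_mem, Finset.univ_inter, Finset.sum_const, nsmul_eq_mul, mul_one]
    have hq : ∑ i : Fin n, (eval (fun i => if i ∈ S then (1:ℂ) else 0)) (Q i) *
        ((if i ∈ S then (1:ℂ) else 0) ^ 2 - (if i ∈ S then (1:ℂ) else 0)) = 0 := by
      refine Finset.sum_eq_zero fun i _ => ?_
      by_cases h : i ∈ S <;> simp [h]
    have he : ∑ p ∈ edgePairs G, (eval (fun i => if i ∈ S then (1:ℂ) else 0)) (Qe p) *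
        ((if p.1 ∈ S then (1:ℂ) else 0) * (if p.2 ∈ S then (1:ℂ) else 0)) = 0 := by
      refine Finset.sum_eq_zero fun p hp => ?_
      simp only [edgePairs, Finset.mem_filter] at hp
      by_cases h1 : p.1 ∈ S
      · by_cases h2 : p.2 ∈ S
        · exact absurd hp.2.2 (hS p.1 h1 p.2 h2)
        · simp [h2]
      · simp [h1]
    rw [hsum, hq, he, add_zero, add_zero] at this
    exact this
  -- S = ∅
  have h0 : eval (fun i => if i ∈ (∅ : Finset (Fin n)) then (1:ℂ) else 0) A = coeff 0 A := by
    rw [eval_indicator]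
    have hsub : A.support.filter (fun m => m.support ⊆ (∅ : Finset (Fin n))) ⊆ {0} := by
      intro m hm
      simp only [Finset.mem_filter, Finset.subset_empty, Finsupp.support_eq_empty] at hm
      simp [hm.2]
    rw [Finset.sum_subset hsub]
    · simp
    · intro m hm hnm
      simp only [Finset.mem_singleton] at hm
      subst hm
      rw [← notMem_support_iff]
      intro hsup
      exact hnm (by simp [Finset.mem_filter, hsup])
  -- S = {v}
  have h1 : eval (fun i => if i ∈ ({v} : Finset (Fin n)) then (1:ℂ) else 0) A
      = coeff 0 A + coeff (Finsupp.single v 1) A := by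
    rw [eval_indicator]
    have hsub : A.support.filter (fun m => m.support ⊆ ({v} : Finset (Fin n)))
        ⊆ {0, Finsupp.single v 1} := by
      intro m hm
      simp only [Finset.mem_filter] at hm
      have hle := (hred m hm.1).1
      rcases Finset.subset_singleton_iff.mp hm.2 with h | h
      · simp [Finsupp.support_eq_empty.mp h]
      · have hmv : m v = 1 := by
          have h1 : 1 ≤ m v := Finsupp.mem_support_iff.mp (h ▸ Finset.mem_singleton_self v)
            |> Nat.one_le_iff_ne_zero.mpr
          exact le_antisymm (hle v) h1
        have : m = Finsupp.single v 1 := by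
          ext i
          by_cases hiv : i = v
          · simp [hiv, hmv]
          · have : i ∉ m.support := by rw [h]; simp [hiv]
            simp [Finsupp.notMem_support_iff.mp this, Finsupp.single_apply,
              Ne.symm hiv, hiv]
        simp [this]
    rw [Finset.sum_subset hsub]
    · rw [Finset.sum_pair (by
        intro h
        have := DFunLike.congr_fun h v
        simp at this)]
    · intro m hm hnm
      rw [← notMem_support_iff]
      intro hsup
      refine hnm (Finset.mem_filter.mpr ⟨hsup, ?_⟩)
      simp only [Finset.mem_insert, Finset.mem_singleton] at hm
      rcases hm with h | h <;> subst h <;> simp [Finsupp.support_single_ne_zero]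
  have hstab0 : IsStableSet G (∅ : Finset (Fin n)) := by intro i hi; simp at hi
  have hstab1 : IsStableSet G ({v} : Finset (Fin n)) := by
    intro i hi j hj
    simp only [Finset.mem_singleton] at hi hj
    subst hi; subst hj
    exact G.irrefl
  have e0 := key ∅ hstab0
  have e1 := key {v} hstab1
  rw [h0] at e0
  rw [h1, hb, add_zero] at e1
  simp only [Finset.card_empty, Nat.cast_zero, zero_sub, Finset.card_singleton,
    Nat.cast_one] at e0 e1
  -- 1 = a * (-k), 1 = a * (1 - k)  ⇒ a = 0 ⇒ 1 = 0
  have ha : coeff 0 A = 0 := by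
    have := e1.symm.trans e0  -- a*(1-k) = a*(-k)
    rw [mul_sub, mul_one, mul_neg] at this
    linear_combination this
  rw [ha, zero_mul] at e0
  exact one_ne_zero e0
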